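/- Let q be a complex number with 0 < |q| < 1. Then Σ_{n=0}^{∞} q^{3n²} (-q;q^2)_{3n} / (q^6;q^6)_{2n} = J_{24}^3 / (J_{3,24} · J_{4,24} · J_{9,24}). -/

import Mathlib

set_option maxHeartbeats 1000000

open scoped BigOperators


open scoped BigOperators

/-- Finite q-Pochhammer symbol `(a;q)_n`. -/
noncomputable def qPoch (a q : ℂ) (n : ℕ) : ℂ := ∏ k ∈ Finset.range n, (1 - a * q ^ k)

/-- Infinite q-Pochhammer symbol `(a;q)_∞`. -/
noncomputable def qPochInf (a q : ℂ) : ℂ := ∏' k : ℕ, (1 - a * q ^ k)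

namespace QW

/-- bound constant for `log (1 - z)` on `‖z‖ ≤ R`. -/
noncomputable def cst (R : ℝ) : ℝ := R * (1 - R)⁻¹ / 2 + 1

lemma cst_nonneg {R : ℝ} (hR0 : 0 ≤ R) (hR : R < 1) : 0 ≤ cst R := by
  unfold cst
  have : (0:ℝ) ≤ (1 - R)⁻¹ := inv_nonneg.mpr (by linarith)
  nlinarith

lemma cst_one_le {R : ℝ} (hR0 : 0 ≤ R) (hR : R < 1) : 1 ≤ cst R := by
  unfold cst
  have : (0:ℝ) ≤ (1 - R)⁻¹ := inv_nonneg.mpr (by linarith)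
  nlinarith

lemma norm_term_le {y P : ℂ} {R : ℝ} (hy : ‖y‖ ≤ R) (hP : ‖P‖ < 1) (k : ℕ) :
    ‖y * P ^ k‖ ≤ R := by
  rw [norm_mul, norm_pow]
  calc ‖y‖ * ‖P‖ ^ k ≤ R * 1 := by
        apply mul_le_mul hy (pow_le_one₀ (norm_nonneg _) hP.le) (by positivity)
          (le_trans (norm_nonneg _) hy)
    _ = R := mul_one R

lemma norm_term_lt {y P : ℂ} (hy : ‖y‖ < 1) (hP : ‖P‖ < 1) (k : ℕ) :
    ‖y * P ^ k‖ < 1 := lt_of_le_of_lt (norm_term_le le_rfl hP k) hy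

lemma one_sub_ne_zero {z : ℂ} (hz : ‖z‖ < 1) : (1 : ℂ) - z ≠ 0 := by
  intro h
  rw [sub_eq_zero] at h
  rw [← h] at hz
  simp at hz

lemma log_bound {z : ℂ} {R : ℝ} (hz : ‖z‖ ≤ R) (hR : R < 1) :
    ‖Complex.log (1 - z)‖ ≤ cst R * ‖z‖ := by
  have hz1 : ‖(-z)‖ < 1 := by rw [norm_neg]; exact lt_of_le_of_lt hz hR
  have h := Complex.norm_log_one_add_le hz1
  rw [show (1 : ℂ) + -z = 1 - z by ring] at h
  rw [norm_neg] at h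
  refine h.trans ?_
  have h1 : ‖z‖ ^ 2 * (1 - ‖z‖)⁻¹ / 2 ≤ R * (1 - R)⁻¹ / 2 * ‖z‖ := by
    have hzn : 0 ≤ ‖z‖ := norm_nonneg _
    have h2 : (1 - ‖z‖)⁻¹ ≤ (1 - R)⁻¹ := by
      apply inv_anti₀ (by linarith) (by linarith)
    have hi1 : (0:ℝ) ≤ (1 - ‖z‖)⁻¹ := inv_nonneg.mpr (by linarith)
    have hi2 : (0:ℝ) ≤ (1 - R)⁻¹ := inv_nonneg.mpr (by linarith)
    have h3 : ‖z‖ ^ 2 * (1 - ‖z‖)⁻¹ ≤ (R * ‖z‖) * (1 - R)⁻¹ := by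
      apply mul_le_mul _ h2 hi1 (by nlinarith)
      nlinarith
    nlinarith
  unfold cst
  nlinarith [norm_nonneg z]

lemma summable_log {y P : ℂ} {R : ℝ} (hy : ‖y‖ ≤ R) (hR : R < 1) (hP : ‖P‖ < 1) :
    Summable (fun k : ℕ => Complex.log (1 - y * P ^ k)) := by
  apply Summable.of_norm_bounded (g := fun k => cst R * ‖y‖ * ‖P‖ ^ k)
    (((summable_geometric_of_lt_one (norm_nonneg P) hP).mul_left _))
  intro k
  calc ‖Complex.log (1 - y * P ^ k)‖ ≤ cst R * ‖y * P ^ k‖ :=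
        log_bound (norm_term_le hy hP k) hR
    _ = cst R * ‖y‖ * ‖P‖ ^ k := by rw [norm_mul, norm_pow, mul_assoc]

lemma tsum_log_norm_le {y P : ℂ} {R : ℝ} (hy : ‖y‖ ≤ R) (hR : R < 1) (hP : ‖P‖ < 1) :
    ‖∑' k : ℕ, Complex.log (1 - y * P ^ k)‖ ≤ cst R * ‖y‖ * (1 - ‖P‖)⁻¹ := by
  have hgeo : Summable (fun k : ℕ => cst R * ‖y‖ * ‖P‖ ^ k) :=
    (summable_geometric_of_lt_one (norm_nonneg P) hP).mul_left _
  calc ‖∑' k : ℕ, Complex.log (1 - y * P ^ k)‖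
      ≤ ∑' k : ℕ, ‖Complex.log (1 - y * P ^ k)‖ :=
        norm_tsum_le_tsum_norm ((summable_log hy hR hP).norm)
    _ ≤ ∑' k : ℕ, cst R * ‖y‖ * ‖P‖ ^ k := by
        apply Summable.tsum_le_tsum _ ((summable_log hy hR hP).norm) hgeo
        intro k
        calc ‖Complex.log (1 - y * P ^ k)‖ ≤ cst R * ‖y * P ^ k‖ :=
              log_bound (norm_term_le hy hP k) hR
          _ = cst R * ‖y‖ * ‖P‖ ^ k := by rw [norm_mul, norm_pow, mul_assoc]
    _ = cst R * ‖y‖ * (1 - ‖P‖)⁻¹ := by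
        rw [tsum_mul_left, tsum_geometric_of_lt_one (norm_nonneg P) hP]

end QW

namespace QW

lemma qPochInf_eq_exp {y P : ℂ} (hy : ‖y‖ < 1) (hP : ‖P‖ < 1) :
    qPochInf y P = Complex.exp (∑' k : ℕ, Complex.log (1 - y * P ^ k)) := by
  have h := Complex.cexp_tsum_eq_tprod (f := fun (k : ℕ) => 1 - y * P ^ k)
    (fun n => one_sub_ne_zero (norm_term_lt hy hP n))
    (summable_log le_rfl hy hP)
  exact h.symm

lemma multipliable_qPochInf {y P : ℂ} (hy : ‖y‖ < 1) (hP : ‖P‖ < 1) :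
    Multipliable (fun k : ℕ => 1 - y * P ^ k) := by
  exact Complex.multipliable_of_summable_log (f := fun (k : ℕ) => 1 - y * P ^ k)
    (summable_log le_rfl hy hP)

lemma qPochInf_ne_zero {y P : ℂ} (hy : ‖y‖ < 1) (hP : ‖P‖ < 1) : qPochInf y P ≠ 0 := by
  rw [qPochInf_eq_exp hy hP]; exact Complex.exp_ne_zero _

lemma norm_qPochInf_le {y P : ℂ} {R : ℝ} (hy : ‖y‖ ≤ R) (hR : R < 1) (hP : ‖P‖ < 1) :
    ‖qPochInf y P‖ ≤ Real.exp (cst R * R * (1 - ‖P‖)⁻¹) := by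
  have hy1 : ‖y‖ < 1 := lt_of_le_of_lt hy hR
  rw [qPochInf_eq_exp hy1 hP, Complex.norm_exp]
  apply Real.exp_le_exp.mpr
  have h1 := tsum_log_norm_le hy hR hP
  have h2 := Complex.re_le_norm (∑' k : ℕ, Complex.log (1 - y * P ^ k))
  have hRn : 0 ≤ R := le_trans (norm_nonneg _) hy
  have h3 : cst R * ‖y‖ * (1 - ‖P‖)⁻¹ ≤ cst R * R * (1 - ‖P‖)⁻¹ :=
    mul_le_mul_of_nonneg_right (mul_le_mul_of_nonneg_left hy (cst_nonneg hRn hR))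
      (inv_nonneg.mpr (by linarith))
  calc (∑' k : ℕ, Complex.log (1 - y * P ^ k)).re
      ≤ ‖∑' k : ℕ, Complex.log (1 - y * P ^ k)‖ := h2
    _ ≤ cst R * ‖y‖ * (1 - ‖P‖)⁻¹ := h1
    _ ≤ cst R * R * (1 - ‖P‖)⁻¹ := h3

lemma qPochInf_sub_one {y P : ℂ} {R : ℝ} (hy : ‖y‖ ≤ R) (hR : R < 1) (hP : ‖P‖ < 1)
    (hsmall : cst R * ‖y‖ * (1 - ‖P‖)⁻¹ ≤ 1) :
    ‖qPochInf y P - 1‖ ≤ 2 * (cst R * (1 - ‖P‖)⁻¹) * ‖y‖ := by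
  have hy1 : ‖y‖ < 1 := lt_of_le_of_lt hy hR
  rw [qPochInf_eq_exp hy1 hP]
  have h1 := tsum_log_norm_le hy hR hP
  have h2 := Complex.norm_exp_sub_one_le (x := ∑' k : ℕ, Complex.log (1 - y * P ^ k))
    (le_trans h1 hsmall)
  calc ‖Complex.exp (∑' k : ℕ, Complex.log (1 - y * P ^ k)) - 1‖
      ≤ 2 * ‖∑' k : ℕ, Complex.log (1 - y * P ^ k)‖ := by
        exact h2
    _ ≤ 2 * (cst R * ‖y‖ * (1 - ‖P‖)⁻¹) := by linarith
    _ = 2 * (cst R * (1 - ‖P‖)⁻¹) * ‖y‖ := by ring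

lemma norm_mul_self_lt {y P : ℂ} (hy : ‖y‖ < 1) (hP : ‖P‖ < 1) : ‖y * P‖ < 1 := by
  have h := norm_term_lt hy hP 1
  rwa [pow_one] at h

lemma qPochInf_peel {y P : ℂ} (hy : ‖y‖ < 1) (hP : ‖P‖ < 1) :
    qPochInf y P = (1 - y) * qPochInf (y * P) P := by
  have hshift : Multipliable (fun k : ℕ => 1 - y * P ^ (k + 1)) := by
    apply (multipliable_qPochInf (norm_mul_self_lt hy hP) hP).congr
    intro k
    rw [pow_succ']
    ring
  rw [qPochInf, tprod_eq_zero_mul' hshift, pow_zero, mul_one, qPochInf]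
  congr 1
  apply tprod_congr
  intro b
  rw [pow_succ']
  ring

lemma qPochInf_peel_poch {y P : ℂ} (hy : ‖y‖ < 1) (hP : ‖P‖ < 1) (n : ℕ) :
    qPochInf y P = qPoch y P n * qPochInf (y * P ^ n) P := by
  induction n with
  | zero => rw [qPoch]; simp
  | succ n ih =>
    have hyn : ‖y * P ^ n‖ < 1 := norm_term_lt hy hP n
    have hq : qPoch y P (n + 1) = qPoch y P n * (1 - y * P ^ n) := by
      rw [qPoch, qPoch, Finset.prod_range_succ]
    rw [ih, qPochInf_peel hyn hP, hq]
    rw [show y * P ^ n * P = y * P ^ (n + 1) by rw [pow_succ]; ring]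
    ring

lemma norm_sq_lt_one {P : ℂ} (hP : ‖P‖ < 1) : ‖P ^ 2‖ < 1 := by
  rw [norm_pow]
  calc ‖P‖ ^ 2 ≤ ‖P‖ := by nlinarith [norm_nonneg P]
    _ < 1 := hP

lemma qPochInf_split_even_odd {y P : ℂ} (hy : ‖y‖ < 1) (hP : ‖P‖ < 1) :
    qPochInf y P = qPochInf y (P ^ 2) * qPochInf (y * P) (P ^ 2) := by
  have hP2 : ‖P ^ 2‖ < 1 := norm_sq_lt_one hP
  have hyP : ‖y * P‖ < 1 := by
    calc ‖y * P‖ = ‖y * P ^ 1‖ := by rw [pow_one]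
      _ < 1 := norm_term_lt hy hP 1
  have he : Multipliable (fun k : ℕ => 1 - y * P ^ (2 * k)) := by
    have := multipliable_qPochInf hy hP2
    apply this.congr
    intro k
    rw [← pow_mul]
  have ho : Multipliable (fun k : ℕ => 1 - y * P ^ (2 * k + 1)) := by
    have := multipliable_qPochInf hyP hP2
    apply this.congr
    intro k
    rw [pow_add, pow_one, ← pow_mul]
    ring
  rw [qPochInf, ← tprod_even_mul_odd he ho]
  congr 1
  · rw [qPochInf]
    apply tprod_congr; intro k; rw [← pow_mul]
  · rw [qPochInf]
    apply tprod_congr; intro k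
    rw [pow_add, pow_one, ← pow_mul]
    ring

lemma qPochInf_mul_neg {y P : ℂ} (hy : ‖y‖ < 1) (hP : ‖P‖ < 1) :
    qPochInf y P * qPochInf (-y) P = qPochInf (y ^ 2) (P ^ 2) := by
  have hny : ‖(-y)‖ < 1 := by rwa [norm_neg]
  rw [qPochInf, qPochInf, qPochInf,
    ← Multipliable.tprod_mul (multipliable_qPochInf hy hP) (multipliable_qPochInf hny hP)]
  apply tprod_congr
  intro k
  rw [show (P ^ 2) ^ k = (P ^ k) ^ 2 by rw [← pow_mul, ← pow_mul, Nat.mul_comm]]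
  ring

end QW

namespace QW

open Filter

lemma qPoch_norm_le {y P : ℂ} (hP : ‖P‖ < 1) (n : ℕ) :
    ‖qPoch y P n‖ ≤ Real.exp (‖y‖ * (1 - ‖P‖)⁻¹) := by
  rw [qPoch, norm_prod]
  have hsum : ∑ k ∈ Finset.range n, ‖y‖ * ‖P‖ ^ k ≤ ‖y‖ * (1 - ‖P‖)⁻¹ := by
    rw [← Finset.mul_sum]
    apply mul_le_mul_of_nonneg_left _ (norm_nonneg y)
    calc ∑ k ∈ Finset.range n, ‖P‖ ^ k ≤ ∑' k : ℕ, ‖P‖ ^ k :=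
          Summable.sum_le_tsum _ (fun i _ => by positivity)
            (summable_geometric_of_lt_one (norm_nonneg P) hP)
      _ = (1 - ‖P‖)⁻¹ := tsum_geometric_of_lt_one (norm_nonneg P) hP
  calc ∏ k ∈ Finset.range n, ‖1 - y * P ^ k‖
      ≤ ∏ k ∈ Finset.range n, Real.exp (‖y‖ * ‖P‖ ^ k) := by
        apply Finset.prod_le_prod (fun i _ => norm_nonneg _)
        intro i _
        calc ‖1 - y * P ^ i‖ ≤ ‖(1:ℂ)‖ + ‖y * P ^ i‖ := norm_sub_le _ _
          _ = 1 + ‖y‖ * ‖P‖ ^ i := by rw [norm_one, norm_mul, norm_pow]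
          _ ≤ Real.exp (‖y‖ * ‖P‖ ^ i) := by
              have := Real.add_one_le_exp (‖y‖ * ‖P‖ ^ i)
              linarith
    _ = Real.exp (∑ k ∈ Finset.range n, ‖y‖ * ‖P‖ ^ k) := (Real.exp_sum _ _).symm
    _ ≤ Real.exp (‖y‖ * (1 - ‖P‖)⁻¹) := Real.exp_le_exp.mpr hsum

lemma exp_le_one_sub {u t : ℝ} (hu : 0 ≤ u) (hut : u ≤ t) (ht : t < 1) :
    Real.exp (-(u * (1 - t)⁻¹)) ≤ 1 - u := by
  have h1u : 0 < 1 - u := by linarith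
  have h1t : 0 < 1 - t := by linarith
  have hlog := Real.log_le_sub_one_of_pos (show (0:ℝ) < (1 - u)⁻¹ by positivity)
  rw [Real.log_inv] at hlog
  have h2 : (1 - u)⁻¹ - 1 = u * (1 - u)⁻¹ := by field_simp; ring
  have h3 : u * (1 - u)⁻¹ ≤ u * (1 - t)⁻¹ := by
    apply mul_le_mul_of_nonneg_left _ hu
    apply inv_anti₀ h1t (by linarith)
  have h4 : -(u * (1 - t)⁻¹) ≤ Real.log (1 - u) := by linarith
  calc Real.exp (-(u * (1 - t)⁻¹)) ≤ Real.exp (Real.log (1 - u)) := Real.exp_le_exp.mpr h4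
    _ = 1 - u := Real.exp_log h1u

lemma qPoch_self_lower {P : ℂ} (hP : ‖P‖ < 1) (n : ℕ) :
    Real.exp (-(‖P‖ * (1 - ‖P‖)⁻¹ * (1 - ‖P‖)⁻¹)) ≤ ‖qPoch P P n‖ := by
  set t := ‖P‖ with ht
  have ht0 : 0 ≤ t := norm_nonneg _
  rw [qPoch, norm_prod]
  have hsum : ∑ k ∈ Finset.range n, t ^ (k + 1) * (1 - t)⁻¹ ≤ t * (1 - t)⁻¹ * (1 - t)⁻¹ := by
    rw [← Finset.sum_mul]
    apply mul_le_mul_of_nonneg_right _ (by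
      have : (0:ℝ) < 1 - t := by linarith
      positivity)
    calc ∑ k ∈ Finset.range n, t ^ (k + 1) = t * ∑ k ∈ Finset.range n, t ^ k := by
          rw [Finset.mul_sum]; exact Finset.sum_congr rfl fun k _ => by rw [pow_succ']
      _ ≤ t * (1 - t)⁻¹ := by
          apply mul_le_mul_of_nonneg_left _ ht0
          calc ∑ k ∈ Finset.range n, t ^ k ≤ ∑' k : ℕ, t ^ k :=
                Summable.sum_le_tsum _ (fun i _ => by positivity)
                  (summable_geometric_of_lt_one ht0 hP)
            _ = (1 - t)⁻¹ := tsum_geometric_of_lt_one ht0 hP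
  calc Real.exp (-(t * (1 - t)⁻¹ * (1 - t)⁻¹))
      ≤ Real.exp (-∑ k ∈ Finset.range n, t ^ (k + 1) * (1 - t)⁻¹) := by
        apply Real.exp_le_exp.mpr; linarith
    _ = ∏ k ∈ Finset.range n, Real.exp (-(t ^ (k + 1) * (1 - t)⁻¹)) := by
        rw [← Real.exp_sum, ← Finset.sum_neg_distrib]
    _ ≤ ∏ k ∈ Finset.range n, ‖1 - P * P ^ k‖ := by
        apply Finset.prod_le_prod (fun i _ => (Real.exp_pos _).le)
        intro i _
        have h1 : t ^ (i + 1) ≤ t := by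
          calc t ^ (i + 1) ≤ t ^ 1 := pow_le_pow_of_le_one ht0 hP.le (by omega)
            _ = t := pow_one t
        calc Real.exp (-(t ^ (i + 1) * (1 - t)⁻¹)) ≤ 1 - t ^ (i + 1) :=
              exp_le_one_sub (by positivity) h1 hP
          _ ≤ ‖1 - P * P ^ i‖ := by
              have h2 : ‖P * P ^ i‖ = t ^ (i + 1) := by
                rw [norm_mul, norm_pow, pow_succ']
              calc 1 - t ^ (i + 1) = ‖(1:ℂ)‖ - ‖P * P ^ i‖ := by rw [norm_one, h2]
                _ ≤ ‖1 - P * P ^ i‖ := norm_sub_norm_le _ _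

lemma qPoch_ne_zero {y P : ℂ} (hy : ‖y‖ < 1) (hP : ‖P‖ < 1) (n : ℕ) :
    qPoch y P n ≠ 0 := by
  rw [qPoch]
  apply Finset.prod_ne_zero_iff.mpr
  intro k _
  exact one_sub_ne_zero (norm_term_lt hy hP k)

lemma choose_two_succ (n : ℕ) : (n + 1).choose 2 = n.choose 2 + n := by
  rw [Nat.choose_succ_succ, Nat.choose_one_right]
  exact Nat.add_comm _ _

lemma summable_pow_mul_choose {r s : ℝ} (hr : 0 ≤ r) (hs0 : 0 ≤ s) (hs : s < 1) :
    Summable (fun n : ℕ => r ^ n * s ^ (n.choose 2)) := by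
  apply summable_of_ratio_norm_eventually_le (show (1:ℝ)/2 < 1 by norm_num)
  have h0 : Tendsto (fun n : ℕ => s ^ n) atTop (nhds 0) :=
    tendsto_pow_atTop_nhds_zero_of_lt_one hs0 hs
  have hev : ∀ᶠ n in atTop, s ^ n ≤ 1 / (2 * (r + 1)) :=
    h0.eventually_le_const (by positivity)
  filter_upwards [hev] with n hn
  rw [Real.norm_of_nonneg (by positivity), Real.norm_of_nonneg (by positivity)]
  have heq : r ^ (n + 1) * s ^ ((n + 1).choose 2) = (r * s ^ n) * (r ^ n * s ^ (n.choose 2)) := by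
    rw [choose_two_succ, pow_succ, pow_add]; ring
  rw [heq]
  apply mul_le_mul_of_nonneg_right _ (by positivity)
  calc r * s ^ n ≤ r * (1 / (2 * (r + 1))) := mul_le_mul_of_nonneg_left hn hr
    _ ≤ 1 / 2 := by
      rw [show r * (1 / (2 * (r + 1))) = r / (2 * (r + 1)) by ring]
      rw [div_le_div_iff₀ (by positivity) (by norm_num)]
      nlinarith

end QW

namespace QW

open Filter

noncomputable def CA (a b Q : ℂ) : ℝ :=
  Real.exp (‖a‖ * (1 - ‖Q‖)⁻¹) * Real.exp (‖b‖ * (1 - ‖Q‖)⁻¹) /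
    Real.exp (-(‖Q ^ 2‖ * (1 - ‖Q ^ 2‖)⁻¹ * (1 - ‖Q ^ 2‖)⁻¹))

lemma CA_pos (a b Q : ℂ) : 0 < CA a b Q := by
  unfold CA; positivity

noncomputable def CP (R : ℝ) (Q : ℂ) : ℝ := Real.exp (cst R * R * (1 - ‖Q‖)⁻¹)

lemma CP_pos (R : ℝ) (Q : ℂ) : 0 < CP R Q := Real.exp_pos _

noncomputable def AA (a b Q : ℂ) (n : ℕ) : ℂ :=
  qPoch a Q n * qPoch b Q n / qPoch (Q ^ 2) (Q ^ 2) n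

noncomputable def TT (a b Q x : ℂ) (n : ℕ) : ℂ :=
  AA a b Q n * Q ^ (n.choose 2) * x ^ n * qPochInf (x * Q ^ n) Q

noncomputable def gg (a b Q x : ℂ) : ℂ := ∑' n : ℕ, TT a b Q x n

noncomputable def ET (a b Q x : ℂ) (n : ℕ) : ℂ :=
  AA a b Q n * Q ^ (n.choose 2) * x ^ n *
    ((1 - Q ^ (2 * n)) + x * Q ^ n * ((a + b) * Q ^ n - 1 - Q)) * qPochInf (x * Q ^ (n + 2)) Q

noncomputable def EE (a b Q x : ℂ) : ℂ := ∑' n : ℕ, ET a b Q x n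

noncomputable def VT (a b Q x : ℂ) (n : ℕ) : ℂ :=
  AA a b Q n * Q ^ (n.choose 2) * x ^ n * (1 - Q ^ (2 * n)) * qPochInf (x * Q ^ (n + 2)) Q

noncomputable def WT (a b Q x : ℂ) (n : ℕ) : ℂ :=
  AA a b Q n * Q ^ (n.choose 2) * x ^ n * (x * Q ^ n * ((a + b) * Q ^ n - 1 - Q)) *
    qPochInf (x * Q ^ (n + 2)) Q

lemma norm_AA_le (a b Q : ℂ) (hQ : ‖Q‖ < 1) (n : ℕ) : ‖AA a b Q n‖ ≤ CA a b Q := by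
  have hQ2 : ‖Q ^ 2‖ < 1 := norm_sq_lt_one hQ
  rw [AA, norm_div, norm_mul, CA]
  apply div_le_div₀ (by positivity)
    (mul_le_mul (qPoch_norm_le hQ n) (qPoch_norm_le hQ n) (norm_nonneg _) (Real.exp_pos _).le)
    (Real.exp_pos _)
    (qPoch_self_lower hQ2 n)

lemma norm_TT_le (a b Q x : ℂ) (hQ : ‖Q‖ < 1) {R : ℝ} (hx : ‖x‖ ≤ R) (hR : R < 1) (n : ℕ) :
    ‖TT a b Q x n‖ ≤ CA a b Q * ‖Q‖ ^ (n.choose 2) * R ^ n * CP R Q := by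
  have hR0 : 0 ≤ R := le_trans (norm_nonneg _) hx
  rw [TT, norm_mul, norm_mul, norm_mul, norm_pow, norm_pow]
  have h1 : ‖AA a b Q n‖ ≤ CA a b Q := norm_AA_le a b Q hQ n
  have h2 : ‖x‖ ^ n ≤ R ^ n := pow_le_pow_left₀ (norm_nonneg _) hx n
  have h3 : ‖qPochInf (x * Q ^ n) Q‖ ≤ CP R Q :=
    norm_qPochInf_le (norm_term_le hx hQ n) hR hQ
  have hCA := (CA_pos a b Q).le
  have hCP := (CP_pos R Q).le
  apply mul_le_mul _ h3 (norm_nonneg _) (by positivity)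
  apply mul_le_mul _ h2 (by positivity) (by positivity)
  apply mul_le_mul h1 le_rfl (by positivity) hCA

lemma norm_bracket_le (a b Q x : ℂ) (ha : ‖a‖ < 1) (hb : ‖b‖ < 1) (hQ : ‖Q‖ < 1)
    (hx : ‖x‖ < 1) (n : ℕ) :
    ‖(1 - Q ^ (2 * n)) + x * Q ^ n * ((a + b) * Q ^ n - 1 - Q)‖ ≤ 6 := by
  have hQn : ‖Q ^ n‖ ≤ 1 := by
    rw [norm_pow]; exact pow_le_one₀ (norm_nonneg _) hQ.le
  have hQ2n : ‖Q ^ (2 * n)‖ ≤ 1 := by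
    rw [norm_pow]; exact pow_le_one₀ (norm_nonneg _) hQ.le
  have h1 : ‖(1 : ℂ) - Q ^ (2 * n)‖ ≤ 2 := by
    calc ‖(1:ℂ) - Q ^ (2*n)‖ ≤ ‖(1:ℂ)‖ + ‖Q ^ (2*n)‖ := norm_sub_le _ _
      _ ≤ 2 := by rw [norm_one]; linarith
  have h2 : ‖(a + b) * Q ^ n - 1 - Q‖ ≤ 4 := by
    calc ‖(a + b) * Q ^ n - 1 - Q‖ ≤ ‖(a+b) * Q ^ n - 1‖ + ‖Q‖ := norm_sub_le _ _
      _ ≤ ‖(a+b) * Q ^ n‖ + ‖(1:ℂ)‖ + ‖Q‖ := by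
          have := norm_sub_le ((a+b) * Q ^ n) 1; linarith
      _ ≤ 4 := by
          rw [norm_one, norm_mul]
          have hab : ‖a + b‖ ≤ 2 := by
            have := norm_add_le a b; linarith
          have : ‖a + b‖ * ‖Q ^ n‖ ≤ 2 * 1 :=
            mul_le_mul hab hQn (norm_nonneg _) (by norm_num)
          linarith
  calc ‖(1 - Q ^ (2 * n)) + x * Q ^ n * ((a + b) * Q ^ n - 1 - Q)‖
      ≤ ‖(1 : ℂ) - Q ^ (2 * n)‖ + ‖x * Q ^ n * ((a + b) * Q ^ n - 1 - Q)‖ := norm_add_le _ _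
    _ ≤ 6 := by
        rw [norm_mul, norm_mul]
        have hx1 : ‖x‖ * ‖Q ^ n‖ ≤ 1 :=
          mul_le_one₀ hx.le (norm_nonneg _) hQn
        have : ‖x‖ * ‖Q ^ n‖ * ‖(a+b) * Q ^ n - 1 - Q‖ ≤ 1 * 4 :=
          mul_le_mul hx1 h2 (norm_nonneg _) (by norm_num)
        linarith

lemma norm_ET_le (a b Q x : ℂ) (ha : ‖a‖ < 1) (hb : ‖b‖ < 1) (hQ : ‖Q‖ < 1)
    {R : ℝ} (hx : ‖x‖ ≤ R) (hR : R < 1) (n : ℕ) :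
    ‖ET a b Q x n‖ ≤ CA a b Q * ‖Q‖ ^ (n.choose 2) * R ^ n * (6 * CP R Q) := by
  have hR0 : 0 ≤ R := le_trans (norm_nonneg _) hx
  have hx1 : ‖x‖ < 1 := lt_of_le_of_lt hx hR
  rw [ET, norm_mul, norm_mul, norm_mul, norm_mul, norm_pow, norm_pow]
  have h1 : ‖AA a b Q n‖ ≤ CA a b Q := norm_AA_le a b Q hQ n
  have h2 : ‖x‖ ^ n ≤ R ^ n := pow_le_pow_left₀ (norm_nonneg _) hx n
  have h3 : ‖qPochInf (x * Q ^ (n + 2)) Q‖ ≤ CP R Q :=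
    norm_qPochInf_le (norm_term_le hx hQ (n + 2)) hR hQ
  have h4 := norm_bracket_le a b Q x ha hb hQ hx1 n
  have hCA := (CA_pos a b Q).le
  have hCP := (CP_pos R Q).le
  calc ‖AA a b Q n‖ * ‖Q‖ ^ (n.choose 2) * ‖x‖ ^ n *
        ‖(1 - Q ^ (2*n)) + x * Q ^ n * ((a + b) * Q ^ n - 1 - Q)‖ *
        ‖qPochInf (x * Q ^ (n + 2)) Q‖
      ≤ CA a b Q * ‖Q‖ ^ (n.choose 2) * R ^ n * 6 * CP R Q := by
        apply mul_le_mul _ h3 (norm_nonneg _) (by positivity)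
        apply mul_le_mul _ h4 (norm_nonneg _) (by positivity)
        apply mul_le_mul _ h2 (by positivity) (by positivity)
        apply mul_le_mul h1 le_rfl (by positivity) hCA
    _ = CA a b Q * ‖Q‖ ^ (n.choose 2) * R ^ n * (6 * CP R Q) := by ring

lemma summable_shape (C D : ℝ) {R s : ℝ} (hR0 : 0 ≤ R) (hR : R < 1) (hs0 : 0 ≤ s)
    (hs : s < 1) : Summable (fun n : ℕ => C * s ^ (n.choose 2) * R ^ n * D) := by
  apply ((summable_pow_mul_choose hR0 hs0 hs).mul_left (C * D)).congr
  intro n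
  ring

lemma summable_TT (a b Q x : ℂ) (hQ : ‖Q‖ < 1) {R : ℝ} (hx : ‖x‖ ≤ R) (hR : R < 1) :
    Summable (TT a b Q x) := by
  have hR0 : 0 ≤ R := le_trans (norm_nonneg _) hx
  exact Summable.of_norm_bounded
    (summable_shape (CA a b Q) (CP R Q) hR0 hR (norm_nonneg Q) hQ)
    (norm_TT_le a b Q x hQ hx hR)

lemma summable_ET (a b Q x : ℂ) (ha : ‖a‖ < 1) (hb : ‖b‖ < 1) (hQ : ‖Q‖ < 1)
    {R : ℝ} (hx : ‖x‖ ≤ R) (hR : R < 1) : Summable (ET a b Q x) := by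
  have hR0 : 0 ≤ R := le_trans (norm_nonneg _) hx
  exact Summable.of_norm_bounded
    (summable_shape (CA a b Q) (6 * CP R Q) hR0 hR (norm_nonneg Q) hQ)
    (norm_ET_le a b Q x ha hb hQ hx hR)

end QW

namespace QW

open Filter

lemma norm_VT_le (a b Q x : ℂ) (hQ : ‖Q‖ < 1) {R : ℝ} (hx : ‖x‖ ≤ R) (hR : R < 1) (n : ℕ) :
    ‖VT a b Q x n‖ ≤ CA a b Q * ‖Q‖ ^ (n.choose 2) * R ^ n * (2 * CP R Q) := by
  have hR0 : 0 ≤ R := le_trans (norm_nonneg _) hx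
  rw [VT, norm_mul, norm_mul, norm_mul, norm_mul, norm_pow, norm_pow]
  have h1 : ‖AA a b Q n‖ ≤ CA a b Q := norm_AA_le a b Q hQ n
  have h2 : ‖x‖ ^ n ≤ R ^ n := pow_le_pow_left₀ (norm_nonneg _) hx n
  have h3 : ‖qPochInf (x * Q ^ (n + 2)) Q‖ ≤ CP R Q :=
    norm_qPochInf_le (norm_term_le hx hQ (n + 2)) hR hQ
  have h4 : ‖(1 : ℂ) - Q ^ (2 * n)‖ ≤ 2 := by
    have hQ2n : ‖Q ^ (2 * n)‖ ≤ 1 := by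
      rw [norm_pow]; exact pow_le_one₀ (norm_nonneg _) hQ.le
    calc ‖(1:ℂ) - Q ^ (2*n)‖ ≤ ‖(1:ℂ)‖ + ‖Q ^ (2*n)‖ := norm_sub_le _ _
      _ ≤ 2 := by rw [norm_one]; linarith
  have hCA := (CA_pos a b Q).le
  have hCP := (CP_pos R Q).le
  calc ‖AA a b Q n‖ * ‖Q‖ ^ (n.choose 2) * ‖x‖ ^ n * ‖(1 : ℂ) - Q ^ (2 * n)‖ *
        ‖qPochInf (x * Q ^ (n + 2)) Q‖
      ≤ CA a b Q * ‖Q‖ ^ (n.choose 2) * R ^ n * 2 * CP R Q := by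
        apply mul_le_mul _ h3 (norm_nonneg _) (by positivity)
        apply mul_le_mul _ h4 (norm_nonneg _) (by positivity)
        apply mul_le_mul _ h2 (by positivity) (by positivity)
        apply mul_le_mul h1 le_rfl (by positivity) hCA
    _ = CA a b Q * ‖Q‖ ^ (n.choose 2) * R ^ n * (2 * CP R Q) := by ring

lemma norm_WT_le (a b Q x : ℂ) (ha : ‖a‖ < 1) (hb : ‖b‖ < 1) (hQ : ‖Q‖ < 1)
    {R : ℝ} (hx : ‖x‖ ≤ R) (hR : R < 1) (n : ℕ) :
    ‖WT a b Q x n‖ ≤ CA a b Q * ‖Q‖ ^ (n.choose 2) * R ^ n * (4 * CP R Q) := by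
  have hR0 : 0 ≤ R := le_trans (norm_nonneg _) hx
  have hx1 : ‖x‖ < 1 := lt_of_le_of_lt hx hR
  rw [WT, norm_mul, norm_mul, norm_mul, norm_mul, norm_pow, norm_pow]
  have h1 : ‖AA a b Q n‖ ≤ CA a b Q := norm_AA_le a b Q hQ n
  have h2 : ‖x‖ ^ n ≤ R ^ n := pow_le_pow_left₀ (norm_nonneg _) hx n
  have h3 : ‖qPochInf (x * Q ^ (n + 2)) Q‖ ≤ CP R Q :=
    norm_qPochInf_le (norm_term_le hx hQ (n + 2)) hR hQ
  have hQn : ‖Q ^ n‖ ≤ 1 := by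
    rw [norm_pow]; exact pow_le_one₀ (norm_nonneg _) hQ.le
  have h4 : ‖x * Q ^ n * ((a + b) * Q ^ n - 1 - Q)‖ ≤ 4 := by
    have h2' : ‖(a + b) * Q ^ n - 1 - Q‖ ≤ 4 := by
      calc ‖(a + b) * Q ^ n - 1 - Q‖ ≤ ‖(a+b) * Q ^ n - 1‖ + ‖Q‖ := norm_sub_le _ _
        _ ≤ ‖(a+b) * Q ^ n‖ + ‖(1:ℂ)‖ + ‖Q‖ := by
            have := norm_sub_le ((a+b) * Q ^ n) 1; linarith
        _ ≤ 4 := by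
            rw [norm_one, norm_mul]
            have hab : ‖a + b‖ ≤ 2 := by have := norm_add_le a b; linarith
            have : ‖a + b‖ * ‖Q ^ n‖ ≤ 2 * 1 :=
              mul_le_mul hab hQn (norm_nonneg _) (by norm_num)
            linarith
    rw [norm_mul, norm_mul]
    have hx1' : ‖x‖ * ‖Q ^ n‖ ≤ 1 := mul_le_one₀ hx1.le (norm_nonneg _) hQn
    have : ‖x‖ * ‖Q ^ n‖ * ‖(a+b) * Q ^ n - 1 - Q‖ ≤ 1 * 4 :=
      mul_le_mul hx1' h2' (norm_nonneg _) (by norm_num)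
    linarith
  have hCA := (CA_pos a b Q).le
  have hCP := (CP_pos R Q).le
  calc ‖AA a b Q n‖ * ‖Q‖ ^ (n.choose 2) * ‖x‖ ^ n *
        ‖x * Q ^ n * ((a + b) * Q ^ n - 1 - Q)‖ * ‖qPochInf (x * Q ^ (n + 2)) Q‖
      ≤ CA a b Q * ‖Q‖ ^ (n.choose 2) * R ^ n * 4 * CP R Q := by
        apply mul_le_mul _ h3 (norm_nonneg _) (by positivity)
        apply mul_le_mul _ h4 (norm_nonneg _) (by positivity)
        apply mul_le_mul _ h2 (by positivity) (by positivity)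
        apply mul_le_mul h1 le_rfl (by positivity) hCA
    _ = CA a b Q * ‖Q‖ ^ (n.choose 2) * R ^ n * (4 * CP R Q) := by ring

lemma summable_VT (a b Q x : ℂ) (hQ : ‖Q‖ < 1) {R : ℝ} (hx : ‖x‖ ≤ R) (hR : R < 1) :
    Summable (VT a b Q x) :=
  Summable.of_norm_bounded
    (summable_shape (CA a b Q) (2 * CP R Q) (le_trans (norm_nonneg _) hx) hR
      (norm_nonneg Q) hQ)
    (norm_VT_le a b Q x hQ hx hR)

lemma summable_WT (a b Q x : ℂ) (ha : ‖a‖ < 1) (hb : ‖b‖ < 1) (hQ : ‖Q‖ < 1)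
    {R : ℝ} (hx : ‖x‖ ≤ R) (hR : R < 1) : Summable (WT a b Q x) :=
  Summable.of_norm_bounded
    (summable_shape (CA a b Q) (4 * CP R Q) (le_trans (norm_nonneg _) hx) hR
      (norm_nonneg Q) hQ)
    (norm_WT_le a b Q x ha hb hQ hx hR)

lemma term1 (a b Q x : ℂ) (hab : a * b = Q) (hQ : ‖Q‖ < 1) (hx : ‖x‖ < 1) (n : ℕ) :
    TT a b Q x n - (1 - a * x) * (1 - b * x) * TT a b Q (x * Q ^ 2) n = ET a b Q x n := by
  have hxn : ‖x * Q ^ n‖ < 1 := norm_term_lt hx hQ n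
  have hxn1 : ‖x * Q ^ n * Q‖ < 1 := norm_mul_self_lt hxn hQ
  have e1 : qPochInf (x * Q ^ n) Q =
      (1 - x * Q ^ n) * ((1 - x * Q ^ n * Q) * qPochInf (x * Q ^ n * Q * Q) Q) := by
    rw [← qPochInf_peel hxn1 hQ, ← qPochInf_peel hxn hQ]
  have e2 : x * Q ^ 2 * Q ^ n = x * Q ^ n * Q * Q := by ring
  have e3 : x * Q ^ (n + 2) = x * Q ^ n * Q * Q := by ring
  rw [TT, TT, ET, e1, e2, e3]
  subst hab
  ring

lemma step1 (a b Q x : ℂ) (hab : a * b = Q) (ha : ‖a‖ < 1) (hb : ‖b‖ < 1)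
    (hQ : ‖Q‖ < 1) (hx : ‖x‖ < 1) :
    gg a b Q x - (1 - a * x) * (1 - b * x) * gg a b Q (x * Q ^ 2) = EE a b Q x := by
  have hxQ2 : ‖x * Q ^ 2‖ < 1 := norm_mul_self_lt hx (norm_sq_lt_one hQ)
  have hs1 : Summable (TT a b Q x) := summable_TT a b Q x hQ le_rfl hx
  have hs2 : Summable (fun n => (1 - a * x) * (1 - b * x) * TT a b Q (x * Q ^ 2) n) :=
    (summable_TT a b Q (x * Q ^ 2) hQ le_rfl hxQ2).mul_left _
  rw [gg, gg, EE, ← tsum_mul_left, ← Summable.tsum_sub hs1 hs2]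
  exact tsum_congr (term1 a b Q x hab hQ hx)

lemma qPoch_succ (y P : ℂ) (n : ℕ) : qPoch y P (n + 1) = qPoch y P n * (1 - y * P ^ n) := by
  rw [qPoch, qPoch, Finset.prod_range_succ]

lemma AA_succ (a b Q : ℂ) (hQ : ‖Q‖ < 1) (n : ℕ) :
    AA a b Q (n + 1) * (1 - Q ^ 2 * (Q ^ 2) ^ n) =
      AA a b Q n * (1 - a * Q ^ n) * (1 - b * Q ^ n) := by
  have hQ2 : ‖Q ^ 2‖ < 1 := norm_sq_lt_one hQ
  have hne : qPoch (Q ^ 2) (Q ^ 2) n ≠ 0 := qPoch_ne_zero hQ2 hQ2 n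
  have hne2 : (1 : ℂ) - Q ^ 2 * (Q ^ 2) ^ n ≠ 0 := one_sub_ne_zero (norm_term_lt hQ2 hQ2 n)
  rw [AA, AA, qPoch_succ a Q n, qPoch_succ b Q n, qPoch_succ (Q ^ 2) (Q ^ 2) n]
  field_simp

lemma term2 (a b Q x : ℂ) (hab : a * b = Q) (hQ : ‖Q‖ < 1) (hx : ‖x‖ < 1) (n : ℕ) :
    VT a b Q x (n + 1) + WT a b Q x n = -(Q * x) * ET a b Q (x * Q) n := by
  have hxn2 : ‖x * Q ^ (n + 2)‖ < 1 := norm_term_lt hx hQ (n + 2)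
  have e1 : qPochInf (x * Q ^ (n + 2)) Q =
      (1 - x * Q ^ (n + 2)) * qPochInf (x * Q ^ (n + 2) * Q) Q := qPochInf_peel hxn2 hQ
  have e2 : x * Q ^ (n + 2) * Q = x * Q ^ (n + 1 + 2) := by ring
  have e3 : x * Q * Q ^ (n + 2) = x * Q ^ (n + 1 + 2) := by ring
  have h5 := AA_succ a b Q hQ n
  rw [VT, WT, ET, choose_two_succ]
  rw [e1, e2, e3]
  subst hab
  linear_combination ((a * b) ^ (n.choose 2 + n) * x ^ (n + 1) *
    qPochInf (x * (a * b) ^ (n + 1 + 2)) (a * b)) * h5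

end QW

namespace QW

open Filter

lemma step2 (a b Q x : ℂ) (hab : a * b = Q) (ha : ‖a‖ < 1) (hb : ‖b‖ < 1)
    (hQ : ‖Q‖ < 1) (hx : ‖x‖ < 1) :
    EE a b Q x = -(Q * x) * EE a b Q (x * Q) := by
  have hsV : Summable (VT a b Q x) := summable_VT a b Q x hQ le_rfl hx
  have hsW : Summable (WT a b Q x) := summable_WT a b Q x ha hb hQ le_rfl hx
  have hsV' : Summable (fun n => VT a b Q x (n + 1)) := (summable_nat_add_iff 1).2 hsV
  have hV0 : VT a b Q x 0 = 0 := by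
    rw [VT]
    norm_num
  calc EE a b Q x = ∑' n : ℕ, (VT a b Q x n + WT a b Q x n) := by
        rw [EE]
        apply tsum_congr
        intro n
        rw [ET, VT, WT]
        ring
    _ = (∑' n : ℕ, VT a b Q x n) + ∑' n : ℕ, WT a b Q x n := Summable.tsum_add hsV hsW
    _ = (∑' n : ℕ, VT a b Q x (n + 1)) + ∑' n : ℕ, WT a b Q x n := by
        rw [Summable.tsum_eq_zero_add hsV, hV0, zero_add]
    _ = ∑' n : ℕ, (VT a b Q x (n + 1) + WT a b Q x n) := (Summable.tsum_add hsV' hsW).symm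
    _ = ∑' n : ℕ, -(Q * x) * ET a b Q (x * Q) n := tsum_congr (term2 a b Q x hab hQ hx)
    _ = -(Q * x) * EE a b Q (x * Q) := by rw [EE, tsum_mul_left]

lemma EE_iter (a b Q x : ℂ) (hab : a * b = Q) (ha : ‖a‖ < 1) (hb : ‖b‖ < 1)
    (hQ : ‖Q‖ < 1) (hx : ‖x‖ < 1) (m : ℕ) :
    EE a b Q x = (-1) ^ m * Q ^ m * Q ^ (m.choose 2) * x ^ m * EE a b Q (x * Q ^ m) := by
  induction m with
  | zero => simp
  | succ m ih =>
    have hxm : ‖x * Q ^ m‖ < 1 := norm_term_lt hx hQ m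
    have h2 := step2 a b Q (x * Q ^ m) hab ha hb hQ hxm
    rw [show x * Q ^ m * Q = x * Q ^ (m + 1) by rw [pow_succ]; ring] at h2
    rw [ih, h2, choose_two_succ]
    ring

noncomputable def SB (R : ℝ) (Q : ℂ) : ℝ := ∑' n : ℕ, R ^ n * ‖Q‖ ^ (n.choose 2)

lemma SB_nonneg {R : ℝ} (hR0 : 0 ≤ R) (Q : ℂ) : 0 ≤ SB R Q :=
  tsum_nonneg fun n => by positivity

lemma norm_EE_le (a b Q x : ℂ) (ha : ‖a‖ < 1) (hb : ‖b‖ < 1) (hQ : ‖Q‖ < 1)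
    {R : ℝ} (hx : ‖x‖ ≤ R) (hR : R < 1) :
    ‖EE a b Q x‖ ≤ CA a b Q * (6 * CP R Q) * SB R Q := by
  have hR0 : 0 ≤ R := le_trans (norm_nonneg _) hx
  have hsum : Summable (fun n : ℕ => CA a b Q * ‖Q‖ ^ (n.choose 2) * R ^ n * (6 * CP R Q)) :=
    summable_shape _ _ hR0 hR (norm_nonneg Q) hQ
  have hET : Summable (ET a b Q x) := summable_ET a b Q x ha hb hQ hx hR
  calc ‖EE a b Q x‖ ≤ ∑' n : ℕ, ‖ET a b Q x n‖ := norm_tsum_le_tsum_norm hET.norm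
    _ ≤ ∑' n : ℕ, CA a b Q * ‖Q‖ ^ (n.choose 2) * R ^ n * (6 * CP R Q) :=
        Summable.tsum_le_tsum (norm_ET_le a b Q x ha hb hQ hx hR) hET.norm hsum
    _ = CA a b Q * (6 * CP R Q) * SB R Q := by
        rw [SB, ← tsum_mul_left]
        apply tsum_congr
        intro n
        ring

lemma EE_zero (a b Q x : ℂ) (hab : a * b = Q) (ha : ‖a‖ < 1) (hb : ‖b‖ < 1)
    (hQ : ‖Q‖ < 1) (hx : ‖x‖ < 1) : EE a b Q x = 0 := by
  set M : ℝ := CA a b Q * (6 * CP ‖x‖ Q) * SB ‖x‖ Q with hM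
  have hM0 : 0 ≤ M := by
    have h1 := (CA_pos a b Q).le
    have h2 := (CP_pos ‖x‖ Q).le
    have h3 := SB_nonneg (norm_nonneg x) Q
    positivity
  have key : ∀ m : ℕ, ‖EE a b Q x‖ ≤ ‖Q‖ ^ m * ‖Q‖ ^ (m.choose 2) * ‖x‖ ^ m * M := by
    intro m
    have hiter := EE_iter a b Q x hab ha hb hQ hx m
    have hxm : ‖x * Q ^ m‖ ≤ ‖x‖ := norm_term_le le_rfl hQ m
    have hEE : ‖EE a b Q (x * Q ^ m)‖ ≤ M := norm_EE_le a b Q _ ha hb hQ hxm hx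
    rw [hiter]
    rw [norm_mul, norm_mul, norm_mul, norm_mul, norm_pow, norm_pow, norm_pow, norm_pow,
      norm_neg, norm_one, one_pow, one_mul]
    apply mul_le_mul _ hEE (norm_nonneg _) (by positivity)
    exact le_rfl
  have htend : Tendsto (fun m : ℕ => ‖Q‖ ^ m * ‖Q‖ ^ (m.choose 2) * ‖x‖ ^ m * M)
      atTop (nhds 0) := by
    have hqx : 0 ≤ ‖Q‖ * ‖x‖ := by positivity
    have hqx1 : ‖Q‖ * ‖x‖ < 1 := by
      calc ‖Q‖ * ‖x‖ ≤ 1 * ‖x‖ :=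
            mul_le_mul_of_nonneg_right hQ.le (norm_nonneg x)
        _ = ‖x‖ := one_mul _
        _ < 1 := hx
    have hsum := (summable_pow_mul_choose (r := ‖Q‖ * ‖x‖) (s := ‖Q‖) hqx (norm_nonneg Q) hQ).mul_right M
    have := hsum.tendsto_atTop_zero
    apply this.congr
    intro m
    rw [mul_pow]
    ring
  have hle : ‖EE a b Q x‖ ≤ 0 := ge_of_tendsto htend (Eventually.of_forall key)
  exact norm_le_zero_iff.mp hle

lemma gg_funeq (a b Q x : ℂ) (hab : a * b = Q) (ha : ‖a‖ < 1) (hb : ‖b‖ < 1)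
    (hQ : ‖Q‖ < 1) (hx : ‖x‖ < 1) :
    gg a b Q x = (1 - a * x) * (1 - b * x) * gg a b Q (x * Q ^ 2) := by
  have h := step1 a b Q x hab ha hb hQ hx
  rw [EE_zero a b Q x hab ha hb hQ hx] at h
  exact sub_eq_zero.mp h

lemma gg_iter (a b Q x : ℂ) (hab : a * b = Q) (ha : ‖a‖ < 1) (hb : ‖b‖ < 1)
    (hQ : ‖Q‖ < 1) (hx : ‖x‖ < 1) (m : ℕ) :
    gg a b Q x = (∏ k ∈ Finset.range m, ((1 - a * x * (Q ^ 2) ^ k) * (1 - b * x * (Q ^ 2) ^ k))) *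
      gg a b Q (x * (Q ^ 2) ^ m) := by
  have hQ2 : ‖Q ^ 2‖ < 1 := norm_sq_lt_one hQ
  induction m with
  | zero => simp
  | succ m ih =>
    have hy : ‖x * (Q ^ 2) ^ m‖ < 1 := norm_term_lt hx hQ2 m
    have h := gg_funeq a b Q (x * (Q ^ 2) ^ m) hab ha hb hQ hy
    rw [show x * (Q ^ 2) ^ m * Q ^ 2 = x * (Q ^ 2) ^ (m + 1) by rw [pow_succ]; ring] at h
    rw [ih, h, Finset.prod_range_succ]
    ring

end QW

namespace QW

open Filter

lemma norm_TT_succ_le (a b Q x : ℂ) (hQ : ‖Q‖ < 1) {R : ℝ} (hx : ‖x‖ ≤ R) (hR : R < 1)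
    (n : ℕ) :
    ‖TT a b Q x (n + 1)‖ ≤ CA a b Q * ‖Q‖ ^ (n.choose 2) * R ^ n * CP R Q * ‖x‖ := by
  have hR0 : 0 ≤ R := le_trans (norm_nonneg _) hx
  rw [TT, norm_mul, norm_mul, norm_mul, norm_pow, norm_pow]
  have h1 : ‖AA a b Q (n + 1)‖ ≤ CA a b Q := norm_AA_le a b Q hQ (n + 1)
  have h2 : ‖Q‖ ^ ((n + 1).choose 2) ≤ ‖Q‖ ^ (n.choose 2) := by
    apply pow_le_pow_of_le_one (norm_nonneg _) hQ.le
    rw [choose_two_succ]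
    omega
  have h3 : ‖x‖ ^ (n + 1) ≤ R ^ n * ‖x‖ := by
    rw [pow_succ]
    exact mul_le_mul_of_nonneg_right (pow_le_pow_left₀ (norm_nonneg _) hx n) (norm_nonneg _)
  have h4 : ‖qPochInf (x * Q ^ (n + 1)) Q‖ ≤ CP R Q :=
    norm_qPochInf_le (norm_term_le hx hQ (n + 1)) hR hQ
  have hCA := (CA_pos a b Q).le
  have hCP := (CP_pos R Q).le
  calc ‖AA a b Q (n + 1)‖ * ‖Q‖ ^ ((n + 1).choose 2) * ‖x‖ ^ (n + 1) *
        ‖qPochInf (x * Q ^ (n + 1)) Q‖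
      ≤ CA a b Q * ‖Q‖ ^ (n.choose 2) * (R ^ n * ‖x‖) * CP R Q := by
        apply mul_le_mul _ h4 (norm_nonneg _) (by positivity)
        apply mul_le_mul _ h3 (by positivity) (by positivity)
        apply mul_le_mul h1 h2 (by positivity) hCA
    _ = CA a b Q * ‖Q‖ ^ (n.choose 2) * R ^ n * CP R Q * ‖x‖ := by ring

lemma TT_zero (a b Q x : ℂ) : TT a b Q x 0 = qPochInf x Q := by
  simp [TT, AA, qPoch]

lemma gg_sub_one (a b Q x : ℂ) (hQ : ‖Q‖ < 1) {R : ℝ} (hx : ‖x‖ ≤ R) (hR : R < 1)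
    (hsmall : cst R * ‖x‖ * (1 - ‖Q‖)⁻¹ ≤ 1) :
    ‖gg a b Q x - 1‖ ≤
      (2 * (cst R * (1 - ‖Q‖)⁻¹) + CA a b Q * CP R Q * SB R Q) * ‖x‖ := by
  have hR0 : 0 ≤ R := le_trans (norm_nonneg _) hx
  have hx1 : ‖x‖ < 1 := lt_of_le_of_lt hx hR
  have hs1 : Summable (TT a b Q x) := summable_TT a b Q x hQ hx hR
  have hs1' : Summable (fun n => TT a b Q x (n + 1)) := (summable_nat_add_iff 1).2 hs1
  have h0 : gg a b Q x = qPochInf x Q + ∑' n : ℕ, TT a b Q x (n + 1) := by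
    rw [gg, Summable.tsum_eq_zero_add hs1, TT_zero]
  have hb1 : ‖qPochInf x Q - 1‖ ≤ 2 * (cst R * (1 - ‖Q‖)⁻¹) * ‖x‖ :=
    qPochInf_sub_one hx hR hQ hsmall
  have hshape : Summable (fun n : ℕ =>
      CA a b Q * ‖Q‖ ^ (n.choose 2) * R ^ n * CP R Q * ‖x‖) :=
    (summable_shape (CA a b Q) (CP R Q) hR0 hR (norm_nonneg Q) hQ).mul_right ‖x‖
  have hb2 : ‖∑' n : ℕ, TT a b Q x (n + 1)‖ ≤ CA a b Q * CP R Q * SB R Q * ‖x‖ := by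
    calc ‖∑' n : ℕ, TT a b Q x (n + 1)‖ ≤ ∑' n : ℕ, ‖TT a b Q x (n + 1)‖ :=
          norm_tsum_le_tsum_norm hs1'.norm
      _ ≤ ∑' n : ℕ, CA a b Q * ‖Q‖ ^ (n.choose 2) * R ^ n * CP R Q * ‖x‖ :=
          Summable.tsum_le_tsum (norm_TT_succ_le a b Q x hQ hx hR) hs1'.norm hshape
      _ = CA a b Q * CP R Q * SB R Q * ‖x‖ := by
          rw [SB, ← tsum_mul_left, ← tsum_mul_right]
          apply tsum_congr
          intro n
          ring
  calc ‖gg a b Q x - 1‖ = ‖(qPochInf x Q - 1) + ∑' n : ℕ, TT a b Q x (n + 1)‖ := by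
        rw [h0]
        congr 1
        ring
    _ ≤ ‖qPochInf x Q - 1‖ + ‖∑' n : ℕ, TT a b Q x (n + 1)‖ := norm_add_le _ _
    _ ≤ (2 * (cst R * (1 - ‖Q‖)⁻¹) + CA a b Q * CP R Q * SB R Q) * ‖x‖ := by
        rw [add_mul]
        exact add_le_add hb1 hb2

lemma gg_tendsto_one (a b Q x : ℂ) (hQ : ‖Q‖ < 1) (hx : ‖x‖ < 1) :
    Tendsto (fun m : ℕ => gg a b Q (x * (Q ^ 2) ^ m)) atTop (nhds 1) := by
  have hQ2 : ‖Q ^ 2‖ < 1 := norm_sq_lt_one hQ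
  set K : ℝ := 2 * (cst ‖x‖ * (1 - ‖Q‖)⁻¹) + CA a b Q * CP ‖x‖ Q * SB ‖x‖ Q with hK
  have h1 : Tendsto (fun m : ℕ => ‖Q ^ 2‖ ^ m) atTop (nhds 0) :=
    tendsto_pow_atTop_nhds_zero_of_lt_one (norm_nonneg _) hQ2
  set c : ℝ := cst ‖x‖ * ‖x‖ * (1 - ‖Q‖)⁻¹ with hc
  have h2 : Tendsto (fun m : ℕ => c * ‖Q ^ 2‖ ^ m) atTop (nhds 0) := by
    have := h1.const_mul c
    simpa using this
  have hev : ∀ᶠ m : ℕ in atTop, c * ‖Q ^ 2‖ ^ m ≤ 1 := h2.eventually_le_const one_pos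
  rw [tendsto_iff_norm_sub_tendsto_zero]
  have h3 : Tendsto (fun m : ℕ => K * ‖x‖ * ‖Q ^ 2‖ ^ m) atTop (nhds 0) := by
    have := h1.const_mul (K * ‖x‖)
    simpa using this
  apply squeeze_zero' (Eventually.of_forall fun m => norm_nonneg _) _ h3
  filter_upwards [hev] with m hm
  have hym : ‖x * (Q ^ 2) ^ m‖ ≤ ‖x‖ := norm_term_le le_rfl hQ2 m
  have hsmall : cst ‖x‖ * ‖x * (Q ^ 2) ^ m‖ * (1 - ‖Q‖)⁻¹ ≤ 1 := by
    rw [norm_mul, norm_pow]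
    calc cst ‖x‖ * (‖x‖ * ‖Q ^ 2‖ ^ m) * (1 - ‖Q‖)⁻¹ = c * ‖Q ^ 2‖ ^ m := by
          rw [hc]; ring
      _ ≤ 1 := hm
  have := gg_sub_one a b Q (x * (Q ^ 2) ^ m) hQ hym hx hsmall
  calc ‖gg a b Q (x * (Q ^ 2) ^ m) - 1‖ ≤ K * ‖x * (Q ^ 2) ^ m‖ := this
    _ = K * ‖x‖ * ‖Q ^ 2‖ ^ m := by rw [norm_mul, norm_pow, mul_assoc]

theorem gg_eq_prod (a b Q x : ℂ) (hab : a * b = Q) (ha : ‖a‖ < 1) (hb : ‖b‖ < 1)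
    (hQ : ‖Q‖ < 1) (hx : ‖x‖ < 1) :
    gg a b Q x = qPochInf (a * x) (Q ^ 2) * qPochInf (b * x) (Q ^ 2) := by
  have hQ2 : ‖Q ^ 2‖ < 1 := norm_sq_lt_one hQ
  have hax : ‖a * x‖ < 1 := by
    rw [norm_mul]
    calc ‖a‖ * ‖x‖ ≤ 1 * ‖x‖ := mul_le_mul_of_nonneg_right ha.le (norm_nonneg x)
      _ = ‖x‖ := one_mul _
      _ < 1 := hx
  have hbx : ‖b * x‖ < 1 := by
    rw [norm_mul]
    calc ‖b‖ * ‖x‖ ≤ 1 * ‖x‖ := mul_le_mul_of_nonneg_right hb.le (norm_nonneg x)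
      _ = ‖x‖ := one_mul _
      _ < 1 := hx
  have hma : Multipliable (fun k : ℕ => 1 - a * x * (Q ^ 2) ^ k) :=
    multipliable_qPochInf hax hQ2
  have hmb : Multipliable (fun k : ℕ => 1 - b * x * (Q ^ 2) ^ k) :=
    multipliable_qPochInf hbx hQ2
  have hT1 : Tendsto
      (fun m : ℕ => ∏ k ∈ Finset.range m, ((1 - a * x * (Q ^ 2) ^ k) * (1 - b * x * (Q ^ 2) ^ k)))
      atTop (nhds (qPochInf (a * x) (Q ^ 2) * qPochInf (b * x) (Q ^ 2))) := by
    have t1 := hma.hasProd.tendsto_prod_nat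
    have t2 := hmb.hasProd.tendsto_prod_nat
    have hmul := t1.mul t2
    rw [qPochInf, qPochInf]
    apply hmul.congr
    intro m
    rw [← Finset.prod_mul_distrib]
  have hT2 := gg_tendsto_one a b Q x hQ hx
  have hT := hT1.mul hT2
  rw [mul_one] at hT
  have heq : (fun m : ℕ =>
      (∏ k ∈ Finset.range m, ((1 - a * x * (Q ^ 2) ^ k) * (1 - b * x * (Q ^ 2) ^ k))) *
        gg a b Q (x * (Q ^ 2) ^ m)) = fun _ : ℕ => gg a b Q x :=
    funext fun m => (gg_iter a b Q x hab ha hb hQ hx m).symm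
  rw [heq] at hT
  exact tendsto_nhds_unique tendsto_const_nhds hT

end QW

namespace QW

lemma A1 (q : ℂ) (n : ℕ) : qPoch (-q) (q ^ 2) (3 * n) =
    qPoch (-q) (q ^ 6) n * qPoch (-(q ^ 3)) (q ^ 6) n * qPoch (-(q ^ 5)) (q ^ 6) n := by
  induction n with
  | zero => simp [qPoch]
  | succ n ih =>
    rw [show 3 * (n + 1) = 3 * n + 1 + 1 + 1 by ring, qPoch_succ, qPoch_succ, qPoch_succ, ih,
      qPoch_succ (-q) (q ^ 6) n, qPoch_succ (-(q ^ 3)) (q ^ 6) n,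
      qPoch_succ (-(q ^ 5)) (q ^ 6) n]
    ring

lemma A2 (q : ℂ) (n : ℕ) : qPoch (q ^ 6) (q ^ 6) (2 * n) =
    qPoch (q ^ 6) (q ^ 12) n * qPoch (q ^ 12) (q ^ 12) n := by
  induction n with
  | zero => simp [qPoch]
  | succ n ih =>
    rw [show 2 * (n + 1) = 2 * n + 1 + 1 by ring, qPoch_succ, qPoch_succ, ih,
      qPoch_succ (q ^ 6) (q ^ 12) n, qPoch_succ (q ^ 12) (q ^ 12) n]
    ring

lemma A3 (q : ℂ) (n : ℕ) : qPoch (q ^ 3) (q ^ 6) n * qPoch (-(q ^ 3)) (q ^ 6) n =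
    qPoch (q ^ 6) (q ^ 12) n := by
  induction n with
  | zero => simp [qPoch]
  | succ n ih =>
    rw [qPoch_succ, qPoch_succ, qPoch_succ, ← ih]
    ring

lemma qpow3 (q : ℂ) (n : ℕ) : q ^ (3 * n ^ 2) = (q ^ 3) ^ n * (q ^ 6) ^ (n.choose 2) := by
  induction n with
  | zero => simp
  | succ n ih =>
    have e1 : 3 * (n + 1) ^ 2 = 3 * n ^ 2 + (6 * n + 3) := by ring
    rw [e1, pow_add, ih, choose_two_succ, pow_add]
    ring

lemma termA (q : ℂ) (hq : ‖q‖ < 1) (n : ℕ) :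
    q ^ (3 * n ^ 2) * qPoch (-q) (q ^ 2) (3 * n) / qPoch (q ^ 6) (q ^ 6) (2 * n) *
      qPochInf (q ^ 3) (q ^ 6) = TT (-q) (-(q ^ 5)) (q ^ 6) (q ^ 3) n := by
  have hpow : ∀ k : ℕ, k ≠ 0 → ‖(q : ℂ) ^ k‖ < 1 := fun k hk => by
    rw [norm_pow]; exact pow_lt_one₀ (norm_nonneg _) hq hk
  have hq3 : ‖(q : ℂ) ^ 3‖ < 1 := hpow 3 (by norm_num)
  have hq6 : ‖(q : ℂ) ^ 6‖ < 1 := hpow 6 (by norm_num)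
  have hq12 : ‖(q : ℂ) ^ 12‖ < 1 := hpow 12 (by norm_num)
  have hnq3 : ‖-((q : ℂ) ^ 3)‖ < 1 := by rwa [norm_neg]
  have hD : qPoch (q ^ 6) (q ^ 6) (2 * n) ≠ 0 := qPoch_ne_zero hq6 hq6 _
  have hC : qPoch (q ^ 3) (q ^ 6) n ≠ 0 := qPoch_ne_zero hq3 hq6 n
  have hP3 : qPoch (-(q ^ 3)) (q ^ 6) n ≠ 0 := qPoch_ne_zero hnq3 hq6 n
  have hD2 : qPoch (q ^ 12) (q ^ 12) n ≠ 0 := qPoch_ne_zero hq12 hq12 n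
  have e12 : ((q : ℂ) ^ 6) ^ 2 = q ^ 12 := by ring
  have hpeel := qPochInf_peel_poch hq3 hq6 n
  rw [TT, AA, e12, hpeel, A1, A2, qpow3, ← A3]
  field_simp

lemma sumA (q : ℂ) (hq : ‖q‖ < 1) :
    (∑' n : ℕ, q ^ (3 * n ^ 2) * qPoch (-q) (q ^ 2) (3 * n) / qPoch (q ^ 6) (q ^ 6) (2 * n)) *
      qPochInf (q ^ 3) (q ^ 6) = gg (-q) (-(q ^ 5)) (q ^ 6) (q ^ 3) := by
  rw [gg, ← tsum_mul_right]
  exact tsum_congr (termA q hq)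

end QW

/-- `J_{a,m} = (q^a, q^{m-a}, q^m; q^m)_∞`. -/
noncomputable def J (q : ℂ) (a m : ℕ) : ℂ :=
  qPochInf (q ^ a) (q ^ m) * qPochInf (q ^ (m - a)) (q ^ m) * qPochInf (q ^ m) (q ^ m)

/-- `J_m = (q^m;q^m)_∞`. -/
noncomputable def Jm (q : ℂ) (m : ℕ) : ℂ := qPochInf (q ^ m) (q ^ m)

theorem lem_W_1 (q : ℂ) (hq0 : 0 < ‖q‖) (hq1 : ‖q‖ < 1) :
    ∑' n : ℕ, q ^ (3 * n ^ 2) * qPoch (-q) (q ^ 2) (3 * n) / qPoch (q ^ 6) (q ^ 6) (2 * n) =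
      Jm q 24 ^ 3 / (J q 3 24 * J q 4 24 * J q 9 24) := by
  have hq : ‖q‖ < 1 := hq1
  have hpow : ∀ k : ℕ, k ≠ 0 → ‖(q : ℂ) ^ k‖ < 1 := fun k hk => by
    rw [norm_pow]; exact pow_lt_one₀ (norm_nonneg _) hq hk
  have hq3 : ‖(q : ℂ) ^ 3‖ < 1 := hpow 3 (by norm_num)
  have hq4 : ‖(q : ℂ) ^ 4‖ < 1 := hpow 4 (by norm_num)
  have hq6 : ‖(q : ℂ) ^ 6‖ < 1 := hpow 6 (by norm_num)
  have hq8 : ‖(q : ℂ) ^ 8‖ < 1 := hpow 8 (by norm_num)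
  have hq9 : ‖(q : ℂ) ^ 9‖ < 1 := hpow 9 (by norm_num)
  have hq12 : ‖(q : ℂ) ^ 12‖ < 1 := hpow 12 (by norm_num)
  have hq15 : ‖(q : ℂ) ^ 15‖ < 1 := hpow 15 (by norm_num)
  have hq16 : ‖(q : ℂ) ^ 16‖ < 1 := hpow 16 (by norm_num)
  have hq20 : ‖(q : ℂ) ^ 20‖ < 1 := hpow 20 (by norm_num)
  have hq21 : ‖(q : ℂ) ^ 21‖ < 1 := hpow 21 (by norm_num)
  have hq24 : ‖(q : ℂ) ^ 24‖ < 1 := hpow 24 (by norm_num)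
  have hnq : ‖-q‖ < 1 := by rwa [norm_neg]
  have hnq4 : ‖-((q : ℂ) ^ 4)‖ < 1 := by rwa [norm_neg]
  have hnq5 : ‖-((q : ℂ) ^ 5)‖ < 1 := by rw [norm_neg]; exact hpow 5 (by norm_num)
  have hnq8 : ‖-((q : ℂ) ^ 8)‖ < 1 := by rwa [norm_neg]
  -- the sum equals gg / (q^3; q^6)∞
  have hPc : qPochInf (q ^ 3) (q ^ 6) ≠ 0 := QW.qPochInf_ne_zero hq3 hq6
  have hsum := QW.sumA q hq
  have hcore := QW.gg_eq_prod (-q) (-(q ^ 5)) (q ^ 6) (q ^ 3) (by ring) hnq hnq5 hq6 hq3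
  rw [show (-q) * q ^ 3 = -(q ^ 4) by ring, show (-(q ^ 5)) * q ^ 3 = -(q ^ 8) by ring,
    show ((q : ℂ) ^ 6) ^ 2 = q ^ 12 by ring] at hcore
  rw [hcore] at hsum
  have hLHS : ∑' n : ℕ, q ^ (3 * n ^ 2) * qPoch (-q) (q ^ 2) (3 * n) /
      qPoch (q ^ 6) (q ^ 6) (2 * n) =
      qPochInf (-(q ^ 4)) (q ^ 12) * qPochInf (-(q ^ 8)) (q ^ 12) / qPochInf (q ^ 3) (q ^ 6) :=
    (eq_div_iff hPc).mpr hsum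
  rw [hLHS]
  -- now the product identities
  have h3 : qPochInf (q ^ 3) (q ^ 6) = qPochInf (q ^ 3) (q ^ 12) * qPochInf (q ^ 9) (q ^ 12) := by
    have h := QW.qPochInf_split_even_odd hq3 hq6
    rwa [show ((q : ℂ) ^ 6) ^ 2 = q ^ 12 by ring, show (q : ℂ) ^ 3 * q ^ 6 = q ^ 9 by ring] at h
  have h3a : qPochInf (q ^ 3) (q ^ 12) =
      qPochInf (q ^ 3) (q ^ 24) * qPochInf (q ^ 15) (q ^ 24) := by
    have h := QW.qPochInf_split_even_odd hq3 hq12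
    rwa [show ((q : ℂ) ^ 12) ^ 2 = q ^ 24 by ring, show (q : ℂ) ^ 3 * q ^ 12 = q ^ 15 by ring] at h
  have h9a : qPochInf (q ^ 9) (q ^ 12) =
      qPochInf (q ^ 9) (q ^ 24) * qPochInf (q ^ 21) (q ^ 24) := by
    have h := QW.qPochInf_split_even_odd hq9 hq12
    rwa [show ((q : ℂ) ^ 12) ^ 2 = q ^ 24 by ring, show (q : ℂ) ^ 9 * q ^ 12 = q ^ 21 by ring] at h
  have h4s : qPochInf (q ^ 4) (q ^ 12) =
      qPochInf (q ^ 4) (q ^ 24) * qPochInf (q ^ 16) (q ^ 24) := by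
    have h := QW.qPochInf_split_even_odd hq4 hq12
    rwa [show ((q : ℂ) ^ 12) ^ 2 = q ^ 24 by ring, show (q : ℂ) ^ 4 * q ^ 12 = q ^ 16 by ring] at h
  have h8s : qPochInf (q ^ 8) (q ^ 12) =
      qPochInf (q ^ 8) (q ^ 24) * qPochInf (q ^ 20) (q ^ 24) := by
    have h := QW.qPochInf_split_even_odd hq8 hq12
    rwa [show ((q : ℂ) ^ 12) ^ 2 = q ^ 24 by ring, show (q : ℂ) ^ 8 * q ^ 12 = q ^ 20 by ring] at h
  have h4 : qPochInf (q ^ 4) (q ^ 12) * qPochInf (-(q ^ 4)) (q ^ 12) =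
      qPochInf (q ^ 8) (q ^ 24) := by
    have h := QW.qPochInf_mul_neg hq4 hq12
    rwa [show ((q : ℂ) ^ 4) ^ 2 = q ^ 8 by ring, show ((q : ℂ) ^ 12) ^ 2 = q ^ 24 by ring] at h
  have h8 : qPochInf (q ^ 8) (q ^ 12) * qPochInf (-(q ^ 8)) (q ^ 12) =
      qPochInf (q ^ 16) (q ^ 24) := by
    have h := QW.qPochInf_mul_neg hq8 hq12
    rwa [show ((q : ℂ) ^ 8) ^ 2 = q ^ 16 by ring, show ((q : ℂ) ^ 12) ^ 2 = q ^ 24 by ring] at h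
  -- nonvanishing of all atoms
  have hF3 : qPochInf (q ^ 3) (q ^ 24) ≠ 0 := QW.qPochInf_ne_zero hq3 hq24
  have hF4 : qPochInf (q ^ 4) (q ^ 24) ≠ 0 := QW.qPochInf_ne_zero hq4 hq24
  have hF8 : qPochInf (q ^ 8) (q ^ 24) ≠ 0 := QW.qPochInf_ne_zero hq8 hq24
  have hF9 : qPochInf (q ^ 9) (q ^ 24) ≠ 0 := QW.qPochInf_ne_zero hq9 hq24
  have hF15 : qPochInf (q ^ 15) (q ^ 24) ≠ 0 := QW.qPochInf_ne_zero hq15 hq24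
  have hF16 : qPochInf (q ^ 16) (q ^ 24) ≠ 0 := QW.qPochInf_ne_zero hq16 hq24
  have hF20 : qPochInf (q ^ 20) (q ^ 24) ≠ 0 := QW.qPochInf_ne_zero hq20 hq24
  have hF21 : qPochInf (q ^ 21) (q ^ 24) ≠ 0 := QW.qPochInf_ne_zero hq21 hq24
  have hF24 : qPochInf (q ^ 24) (q ^ 24) ≠ 0 := QW.qPochInf_ne_zero hq24 hq24
  have hG4 : qPochInf (-(q ^ 4)) (q ^ 12) =
      qPochInf (q ^ 8) (q ^ 24) / (qPochInf (q ^ 4) (q ^ 24) * qPochInf (q ^ 16) (q ^ 24)) := by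
    rw [eq_div_iff (mul_ne_zero hF4 hF16), ← h4s]
    linear_combination h4
  have hG8 : qPochInf (-(q ^ 8)) (q ^ 12) =
      qPochInf (q ^ 16) (q ^ 24) / (qPochInf (q ^ 8) (q ^ 24) * qPochInf (q ^ 20) (q ^ 24)) := by
    rw [eq_div_iff (mul_ne_zero hF8 hF20), ← h8s]
    linear_combination h8
  have hJ3 : J q 3 24 = qPochInf (q ^ 3) (q ^ 24) * qPochInf (q ^ 21) (q ^ 24) *
      qPochInf (q ^ 24) (q ^ 24) := by
    rw [J]
  have hJ4 : J q 4 24 = qPochInf (q ^ 4) (q ^ 24) * qPochInf (q ^ 20) (q ^ 24) *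
      qPochInf (q ^ 24) (q ^ 24) := by
    rw [J]
  have hJ9 : J q 9 24 = qPochInf (q ^ 9) (q ^ 24) * qPochInf (q ^ 15) (q ^ 24) *
      qPochInf (q ^ 24) (q ^ 24) := by
    rw [J]
  have hGG : qPochInf (-(q ^ 4)) (q ^ 12) * qPochInf (-(q ^ 8)) (q ^ 12) *
      (qPochInf (q ^ 4) (q ^ 24) * qPochInf (q ^ 20) (q ^ 24)) = 1 := by
    rw [hG4, hG8]
    field_simp
  have hden : qPochInf (q ^ 3) (q ^ 24) * qPochInf (q ^ 21) (q ^ 24) *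
        qPochInf (q ^ 24) (q ^ 24) *
        (qPochInf (q ^ 4) (q ^ 24) * qPochInf (q ^ 20) (q ^ 24) * qPochInf (q ^ 24) (q ^ 24)) *
        (qPochInf (q ^ 9) (q ^ 24) * qPochInf (q ^ 15) (q ^ 24) *
          qPochInf (q ^ 24) (q ^ 24)) ≠ 0 :=
    mul_ne_zero (mul_ne_zero (mul_ne_zero (mul_ne_zero hF3 hF21) hF24)
      (mul_ne_zero (mul_ne_zero hF4 hF20) hF24)) (mul_ne_zero (mul_ne_zero hF9 hF15) hF24)
  have hPc2 : qPochInf (q ^ 3) (q ^ 24) * qPochInf (q ^ 15) (q ^ 24) *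
      (qPochInf (q ^ 9) (q ^ 24) * qPochInf (q ^ 21) (q ^ 24)) ≠ 0 :=
    mul_ne_zero (mul_ne_zero hF3 hF15) (mul_ne_zero hF9 hF21)
  rw [hJ3, hJ4, hJ9, Jm, h3, h3a, h9a]
  rw [div_eq_div_iff hPc2 hden]
  linear_combination (qPochInf (q ^ 3) (q ^ 24) * qPochInf (q ^ 21) (q ^ 24) *
    qPochInf (q ^ 9) (q ^ 24) * qPochInf (q ^ 15) (q ^ 24) *
    qPochInf (q ^ 24) (q ^ 24) ^ 3) * hGG
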